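/- arXiv:1910.09197 — 2 statements merged into one kernel-verified Lean document; each statement's English description precedes it below -/
import Mathlib

section
/- Let b_1, ..., b_N be positive real numbers and let zeta > 0 be such that sum_{k=1}^N b_n/(b_k * zeta) > 1 for every n. Define t_n* = (1/b_n) * ln( sum_{k=1}^N b_n/(b_k * zeta) ). Then (i) sum_{n=1}^N exp(-b_n * t_n*) = zeta, i.e., the constraint is active at t*, and (ii) for every vector t = (t_1, ..., t_N) of real numbers satisfying sum_{n=1}^N exp(-b_n * t_n) <= zeta, one has sum_{n=1}^N t_n >= sum_{n=1}^N t_n*. Hence t* is the global minimizer of sum_n t_n subject to sum_n exp(-b_n t_n) <= zeta. -/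
/-- Power allocation subproblem of the secrecy optimization:
`t* n = (1/b n) * ln (∑ k, b n / (b k ζ))` is the unique active point at which the
constraint `∑ n, exp (-(b n t n)) ≤ ζ` is met with equality, and it globally minimizes
`∑ n, t n` over all real vectors satisfying the constraint. -/
theorem secrecy_power_allocation_optimal
    (N : ℕ) (hN : 0 < N) (b : Fin N → ℝ) (hb : ∀ n, 0 < b n)
    (ζ : ℝ) (hζ : 0 < ζ)
    (hfeas : ∀ n, 1 < ∑ k, b n / (b k * ζ))
    (tstar : Fin N → ℝ)
    (htstar : ∀ n, tstar n = (1 / b n) * Real.log (∑ k, b n / (b k * ζ))) :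
    (∑ n, Real.exp (-(b n * tstar n))) = ζ ∧
    (∀ t : Fin N → ℝ, (∑ n, Real.exp (-(b n * t n))) ≤ ζ →
      ∑ n, tstar n ≤ ∑ n, t n) := by
  have hCpos : (0:ℝ) < ∑ k, 1 / (b k * ζ) :=
    Finset.sum_pos (fun k _ => by have := hb k; positivity) ⟨⟨0, hN⟩, Finset.mem_univ _⟩
  set C : ℝ := ∑ k, 1 / (b k * ζ) with hC
  have hS : ∀ n, (∑ k, b n / (b k * ζ)) = b n * C := by
    intro n; rw [hC, Finset.mul_sum]
    refine Finset.sum_congr rfl fun k _ => ?_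
    rw [mul_one_div]
  have hexp : ∀ n, Real.exp (-(b n * tstar n)) = (b n * C)⁻¹ := by
    intro n
    have hbn := hb n
    rw [htstar n, hS n,
      show b n * ((1 / b n) * Real.log (b n * C)) = Real.log (b n * C) by field_simp,
      Real.exp_neg, Real.exp_log (by positivity)]
  have hsum1 : (∑ n, Real.exp (-(b n * tstar n))) = ζ := by
    have hCeq : C = ζ⁻¹ * ∑ k : Fin N, (b k)⁻¹ := by
      rw [hC, Finset.mul_sum]
      refine Finset.sum_congr rfl fun k _ => ?_
      have := hb k; field_simp
    have hbsum : 0 < ∑ k : Fin N, (b k)⁻¹ :=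
      Finset.sum_pos (fun k _ => inv_pos.2 (hb k)) ⟨⟨0, hN⟩, Finset.mem_univ _⟩
    calc (∑ n, Real.exp (-(b n * tstar n))) = ∑ n, C⁻¹ * (b n)⁻¹ := by
          refine Finset.sum_congr rfl fun n _ => ?_
          rw [hexp n, mul_inv]; ring
      _ = C⁻¹ * ∑ n : Fin N, (b n)⁻¹ := by rw [Finset.mul_sum]
      _ = ζ := by rw [hCeq]; field_simp; exact div_self (by simpa using hbsum.ne')
  refine ⟨hsum1, fun t ht => ?_⟩
  have key : ∀ n : Fin N, (b n * C)⁻¹ + C⁻¹ * (tstar n - t n) ≤ Real.exp (-(b n * t n)) := by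
    intro n
    have hbn := hb n
    have h1 : Real.exp (-(b n * t n))
        = Real.exp (-(b n * tstar n)) * Real.exp (b n * tstar n - b n * t n) := by
      rw [← Real.exp_add]; ring_nf
    rw [h1, hexp n]
    have h2 : (b n * tstar n - b n * t n) + 1 ≤ Real.exp (b n * tstar n - b n * t n) :=
      Real.add_one_le_exp _
    have h3 : (0:ℝ) < (b n * C)⁻¹ := by positivity
    calc (b n * C)⁻¹ + C⁻¹ * (tstar n - t n)
        = (b n * C)⁻¹ * ((b n * tstar n - b n * t n) + 1) := by field_simp; ring
      _ ≤ (b n * C)⁻¹ * Real.exp (b n * tstar n - b n * t n) :=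
          mul_le_mul_of_nonneg_left h2 h3.le
  have hsum2 : (∑ n, ((b n * C)⁻¹ + C⁻¹ * (tstar n - t n))) ≤ ∑ n, Real.exp (-(b n * t n)) :=
    Finset.sum_le_sum fun n _ => key n
  have hleft : (∑ n, ((b n * C)⁻¹ + C⁻¹ * (tstar n - t n)))
      = ζ + C⁻¹ * (∑ n, tstar n - ∑ n, t n) := by
    rw [Finset.sum_add_distrib, ← Finset.mul_sum, Finset.sum_sub_distrib]
    congr 1
    calc (∑ n, (b n * C)⁻¹) = ∑ n, Real.exp (-(b n * tstar n)) :=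
          Finset.sum_congr rfl fun n _ => (hexp n).symm
      _ = ζ := hsum1
  have h5 : ζ + C⁻¹ * (∑ n, tstar n - ∑ n, t n) ≤ ζ := by
    rw [← hleft]; exact hsum2.trans ht
  have h4 : C⁻¹ * (∑ n, tstar n - ∑ n, t n) ≤ 0 := by linarith
  nlinarith [inv_pos.2 hCpos]
end

section
/- Let A > 0 and gamma > 0 be real numbers, and define f(R) = R * exp( -A * ((gamma + 1) * 2^R - 1) / gamma ) for R > 0. Then there exists a unique R* > 0 satisfying (A * (gamma + 1) / gamma) * ln(2) * 2^{R*} * R* = 1; moreover f is strictly increasing on (0, R*] and strictly decreasing on [R*, infinity). In particular, f is quasi-concave on (0, infinity) and R* is its unique global maximizer (R* equals (1/ln 2) * W_0( gamma / (A * (gamma + 1)) ), where W_0 is the principal branch of the Lambert W function). -/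
open Real Set


/-- Proposition 1 of the paper: for `A > 0`, `γ > 0`, the secrecy-throughput objective
`f(R) = R * exp (-A ((γ+1) 2^R - 1) / γ)` has a unique stationary point `R* > 0`
characterized by `(A (γ+1)/γ) ln 2 · 2^{R*} · R* = 1`; `f` is strictly increasing on
`(0, R*]`, strictly decreasing on `[R*, ∞)`, so `R*` is the unique global maximizer on
`(0, ∞)`; moreover `(ln 2 · R*) e^{ln 2 · R*} = γ/(A(γ+1))`, i.e.
`R* = (1/ln 2) W₀(γ/(A(γ+1)))` with `W₀` the principal Lambert W branch. -/
theorem secrecy_rate_objective_quasiconcave (A γ : ℝ) (hA : 0 < A) (hγ : 0 < γ) :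
    ∃ Rstar : ℝ, 0 < Rstar ∧
      (A * (γ + 1) / γ) * Real.log 2 * (2 : ℝ) ^ Rstar * Rstar = 1 ∧
      (∀ R : ℝ, 0 < R → (A * (γ + 1) / γ) * Real.log 2 * (2 : ℝ) ^ R * R = 1 →
        R = Rstar) ∧
      StrictMonoOn (fun R : ℝ => R * Real.exp (-A * ((γ + 1) * (2 : ℝ) ^ R - 1) / γ))
        (Set.Ioc 0 Rstar) ∧
      StrictAntiOn (fun R : ℝ => R * Real.exp (-A * ((γ + 1) * (2 : ℝ) ^ R - 1) / γ))
        (Set.Ici Rstar) ∧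
      (∀ R : ℝ, 0 < R → R ≠ Rstar →
        R * Real.exp (-A * ((γ + 1) * (2 : ℝ) ^ R - 1) / γ) <
          Rstar * Real.exp (-A * ((γ + 1) * (2 : ℝ) ^ Rstar - 1) / γ)) ∧
      (Real.log 2 * Rstar) * Real.exp (Real.log 2 * Rstar) = γ / (A * (γ + 1)) := by
  have h2 : (0:ℝ) < 2 := by norm_num
  have hlog2 : 0 < Real.log 2 := Real.log_pos one_lt_two
  have hγ1 : 0 < γ + 1 := by linarith
  set c : ℝ := A * (γ + 1) / γ * Real.log 2 with hc_def
  have hc : 0 < c := by positivity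
  -- rewrite 2^R as exp(log 2 * R)
  simp only [Real.rpow_def_of_pos h2]
  set G : ℝ → ℝ := fun R => c * Real.exp (Real.log 2 * R) * R with hG_def
  set F : ℝ → ℝ := fun R => R * Real.exp (-A * ((γ + 1) * Real.exp (Real.log 2 * R) - 1) / γ)
    with hF_def
  have hGmono : StrictMonoOn G (Set.Ici 0) := by
    intro x hx y hy hxy
    simp only [hG_def]
    have he : Real.exp (Real.log 2 * x) ≤ Real.exp (Real.log 2 * y) := by
      apply Real.exp_le_exp.mpr; nlinarith
    have hpx : 0 < Real.exp (Real.log 2 * x) := Real.exp_pos _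
    have hpy : 0 < Real.exp (Real.log 2 * y) := Real.exp_pos _
    have hx0 : (0:ℝ) ≤ x := hx
    nlinarith [mul_le_mul_of_nonneg_right he hx0, mul_lt_mul_of_pos_left hxy hpy]
  -- existence
  have hGcont : Continuous G := by fun_prop
  obtain ⟨Rstar, hRmem, hRstareq⟩ : ∃ R ∈ Set.Icc (0:ℝ) (max 1 c⁻¹), G R = 1 := by
    have h1le : (1:ℝ) ∈ Set.Icc (G 0) (G (max 1 c⁻¹)) := by
      constructor
      · simp [hG_def]
      · have hb1 : (1:ℝ) ≤ max 1 c⁻¹ := le_max_left _ _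
        have hbc : c⁻¹ ≤ max 1 c⁻¹ := le_max_right _ _
        have hbpos : (0:ℝ) < max 1 c⁻¹ := by linarith
        have hexp : (1:ℝ) ≤ Real.exp (Real.log 2 * max 1 c⁻¹) := by
          rw [show (1:ℝ) = Real.exp 0 by simp]
          apply Real.exp_le_exp.mpr; positivity
        have : c * c⁻¹ = 1 := mul_inv_cancel₀ hc.ne'
        simp only [hG_def]
        have e1 : c * c⁻¹ ≤ c * max 1 c⁻¹ := mul_le_mul_of_nonneg_left hbc hc.le
        have e2 : c * max 1 c⁻¹ ≤ c * Real.exp (Real.log 2 * max 1 c⁻¹) * max 1 c⁻¹ := by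
          nlinarith
        linarith
    have := intermediate_value_Icc (le_trans zero_le_one (le_max_left 1 c⁻¹))
      hGcont.continuousOn
    obtain ⟨R, hR1, hR2⟩ := this h1le
    exact ⟨R, hR1, hR2⟩
  have hRpos : 0 < Rstar := by
    rcases lt_or_eq_of_le hRmem.1 with h | h
    · exact h
    · exfalso; rw [hG_def] at hRstareq; simp [← h] at hRstareq
  -- derivative of F
  have hF' : ∀ x : ℝ, HasDerivAt F
      (Real.exp (-A * ((γ + 1) * Real.exp (Real.log 2 * x) - 1) / γ) * (1 - G x)) x := by
    intro x
    have h1 : HasDerivAt (fun R : ℝ => Real.log 2 * R) (Real.log 2) x := by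
      simpa using (hasDerivAt_id x).const_mul (Real.log 2)
    have h2 := h1.exp
    have h3 : HasDerivAt (fun R => -A * ((γ + 1) * Real.exp (Real.log 2 * R) - 1) / γ)
        (-A * ((γ + 1) * (Real.exp (Real.log 2 * x) * Real.log 2)) / γ) x :=
      (((h2.const_mul (γ + 1)).sub_const 1).const_mul (-A)).div_const γ
    have h4 := h3.exp
    have h5 : HasDerivAt (fun y => y * Real.exp (-A * ((γ + 1) * Real.exp (Real.log 2 * y) - 1) / γ)) _ x :=
      (hasDerivAt_id' x).mul h4
    simp only [hF_def, hG_def]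
    convert h5 using 1
    simp only [hc_def]
    field_simp
    ring
  have key : ∀ x ∈ Set.Ioo (0:ℝ) Rstar, 0 < 1 - G x := by
    intro x hx
    have := hGmono (le_of_lt hx.1) (le_of_lt hRpos) hx.2
    rw [hRstareq] at this; linarith
  have key2 : ∀ x ∈ Set.Ioi Rstar, 1 - G x < 0 := by
    intro x hx
    have := hGmono (le_of_lt hRpos) (le_of_lt (lt_trans hRpos hx)) hx
    rw [hRstareq] at this; linarith
  have hFcont : Continuous F := by fun_prop
  have hmono : StrictMonoOn F (Set.Ioc 0 Rstar) := by
    apply strictMonoOn_of_deriv_pos (convex_Ioc 0 Rstar) hFcont.continuousOn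
    intro x hx
    rw [interior_Ioc] at hx
    rw [(hF' x).deriv]
    have := key x hx
    positivity
  have hanti : StrictAntiOn F (Set.Ici Rstar) := by
    apply strictAntiOn_of_deriv_neg (convex_Ici Rstar) hFcont.continuousOn
    intro x hx
    rw [interior_Ici] at hx
    rw [(hF' x).deriv]
    have := key2 x hx
    have := Real.exp_pos (-A * ((γ + 1) * Real.exp (Real.log 2 * x) - 1) / γ)
    nlinarith
  refine ⟨Rstar, hRpos, ?_, ?_, hmono, hanti, ?_, ?_⟩
  · simpa [hG_def, hc_def, mul_assoc] using hRstareq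
  · intro R hR hReq
    have hReq' : G R = 1 := by simpa [hG_def, hc_def, mul_assoc] using hReq
    exact hGmono.injOn (le_of_lt hR) (le_of_lt hRpos) (by rw [hReq', hRstareq])
  · intro R hR hRne
    rcases lt_or_gt_of_ne hRne with h | h
    · exact hmono ⟨hR, h.le⟩ ⟨hRpos, le_refl _⟩ h
    · exact hanti (le_refl Rstar) h.le h
  · have : c * Real.exp (Real.log 2 * Rstar) * Rstar = 1 := hRstareq
    rw [hc_def] at this
    have hA1 : A * (γ + 1) ≠ 0 := by positivity
    field_simp at this ⊢
    nlinarith [this]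
end
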